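/- arXiv:2407.18560 — 2 statements merged into one kernel-verified Lean document; each statement's English description precedes it below -/
import Mathlib

section
/- For every integer K ≥ 2, the real number I_K := (2^K − 1) * (K − ((2^K − 1)/2^K) * Real.logb 2 (2^K − 1)) satisfies I_K > K. -/
lemma two_mul_le_two_pow (K : ℕ) (hK : 2 ≤ K) : 2 * K ≤ 2 ^ K := by
  induction K with
  | zero => omega
  | succ n ih =>
    rcases Nat.lt_or_ge n 2 with h | h
    · interval_cases n <;> simp [pow_succ] <;> omega
    · have := ih h
      have : 2 ≤ 2 ^ n := Nat.one_lt_two_pow_iff.mpr (by omega)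
      rw [pow_succ]; omega

theorem I_K_gt_K (K : ℕ) (hK : 2 ≤ K) :
    ((2 : ℝ) ^ K - 1) *
        ((K : ℝ) - (((2 : ℝ) ^ K - 1) / (2 : ℝ) ^ K) * Real.logb 2 ((2 : ℝ) ^ K - 1)) >
      (K : ℝ) := by
  set N : ℝ := (2 : ℝ) ^ K with hNdef
  have hN4 : (4 : ℝ) ≤ N := by
    calc (4 : ℝ) = 2 ^ 2 := by norm_num
    _ ≤ 2 ^ K := by exact pow_le_pow_right₀ (by norm_num) hK
  have hN0 : (0 : ℝ) < N := by linarith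
  have hM0 : (0 : ℝ) < N - 1 := by linarith
  have hl2 : (0.6931471803 : ℝ) < Real.log 2 := Real.log_two_gt_d9
  have hl2' : Real.log 2 < 0.6931471808 := Real.log_two_lt_d9
  have hl2pos : (0 : ℝ) < Real.log 2 := by linarith
  -- K ≤ N / 2
  have hKN : 2 * (K : ℝ) ≤ N := by
    have := two_mul_le_two_pow K hK
    calc 2 * (K : ℝ) = ((2 * K : ℕ) : ℝ) := by push_cast; ring
    _ ≤ ((2 ^ K : ℕ) : ℝ) := by exact_mod_cast this
    _ = N := by push_cast; ring
  -- log bound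
  set x : ℝ := Real.log (N - 1) with hxdef
  have hx : x ≤ (K : ℝ) * Real.log 2 - 1 / N := by
    have h1 : N - 1 = N * (1 - 1 / N) := by field_simp
    have h2 : (0 : ℝ) < 1 - 1 / N := by
      have : 1 / N < 1 := by rw [div_lt_one hN0]; linarith
      linarith
    have h3 : Real.log (1 - 1 / N) ≤ (1 - 1 / N) - 1 :=
      Real.log_le_sub_one_of_pos h2
    have h4 : x = Real.log N + Real.log (1 - 1 / N) := by
      rw [hxdef, h1, Real.log_mul (ne_of_gt hN0) (ne_of_gt h2)]
    have h5 : Real.log N = (K : ℝ) * Real.log 2 := by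
      rw [hNdef, Real.log_pow]
    rw [h4, h5]; linarith
  rw [Real.logb]
  have key : (N - 1) * ((K : ℝ) - ((N - 1) / N) * (x / Real.log 2)) - K =
      ((N - 1) * ((K : ℝ) * N * Real.log 2 - (N - 1) * x) - (K : ℝ) * (N * Real.log 2)) /
        (N * Real.log 2) := by
    field_simp
  have hnum : 0 < (N - 1) * ((K : ℝ) * N * Real.log 2 - (N - 1) * x) -
      (K : ℝ) * (N * Real.log 2) := by
    have hxb : (N - 1) ^ 2 * x ≤ (N - 1) ^ 2 * ((K : ℝ) * Real.log 2 - 1 / N) := by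
      have : (0 : ℝ) ≤ (N - 1) ^ 2 := sq_nonneg _
      nlinarith
    have hKpos : (0 : ℝ) ≤ (K : ℝ) := Nat.cast_nonneg K
    -- (N-1)^2 > K * N * log 2
    have hmain : (K : ℝ) * N * Real.log 2 < (N - 1) ^ 2 := by
      nlinarith [sq_nonneg (N - 4), mul_pos hN0 hl2pos]
    have hx' : N * x ≤ (K : ℝ) * N * Real.log 2 - 1 := by
      have h1N : N * (1 / N) = 1 := by field_simp
      nlinarith [mul_le_mul_of_nonneg_left hx hN0.le]
    have hNum : 0 < ((N - 1) * ((K : ℝ) * N * Real.log 2 - (N - 1) * x) -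
        (K : ℝ) * (N * Real.log 2)) * N := by
      nlinarith [mul_le_mul_of_nonneg_left hx' (sq_nonneg (N - 1)), hmain]
    by_contra h
    push_neg at h
    nlinarith [hNum, hN0]
  have hden : 0 < N * Real.log 2 := mul_pos hN0 hl2pos
  have : 0 < (N - 1) * ((K : ℝ) - ((N - 1) / N) * (x / Real.log 2)) - K := by
    rw [key]; positivity
  linarith
end

section
/- For every integer K ≥ 2, the following strict inequality of real numbers holds: (2^K − K − 1)/(2^K − 1) > (1 − K) + ((2^K − 1)/2^K) * Real.logb 2 (2^K − 1). (Hence the best-case upper-bound coefficient for K-AND-OR-BNs strictly exceeds the entropy lower-bound coefficient, independently of n.) -/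
lemma aux_pow_bound (K : ℕ) (hK : 2 ≤ K) : K + 2 ≤ 2 ^ K := by
  induction K with
  | zero => omega
  | succ n ih =>
    rcases Nat.lt_or_ge n 2 with h | h
    · interval_cases n <;> simp_all <;> omega
    · have := ih h
      have : 1 ≤ 2 ^ n := Nat.one_le_two_pow
      simpa [pow_succ] using by omega

theorem upper_coeff_gt_lower_coeff (K : ℕ) (hK : 2 ≤ K) :
    ((2 : ℝ) ^ K - (K : ℝ) - 1) / ((2 : ℝ) ^ K - 1) >
      (1 - (K : ℝ)) + (((2 : ℝ) ^ K - 1) / (2 : ℝ) ^ K) * Real.logb 2 ((2 : ℝ) ^ K - 1) := by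
  set N : ℝ := (2 : ℝ) ^ K with hN
  have hN4 : (4 : ℝ) ≤ N := by
    have : (2:ℝ)^2 ≤ (2:ℝ)^K := pow_le_pow_right₀ (by norm_num) hK
    norm_num at this; linarith
  have hNpos : (0 : ℝ) < N := by linarith
  have hN1 : (0 : ℝ) < N - 1 := by linarith
  have hlog2 : (0 : ℝ) < Real.log 2 := Real.log_pos (by norm_num)
  have hlog2lt : Real.log 2 < 1 := by
    have := Real.log_two_lt_d9; linarith
  -- K ≤ N - 2
  have hKN : (K : ℝ) ≤ N - 2 := by
    have h := aux_pow_bound K hK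
    have : ((K + 2 : ℕ) : ℝ) ≤ ((2 ^ K : ℕ) : ℝ) := by exact_mod_cast h
    push_cast at this
    linarith
  -- log (N - 1) ≤ K * log 2 - 1/N
  have hlogN : Real.log N = K * Real.log 2 := by
    rw [hN, Real.log_pow]
  have hsub : Real.log (N - 1) ≤ (K : ℝ) * Real.log 2 - 1 / N := by
    have h1 : Real.log ((N - 1) / N) ≤ (N - 1) / N - 1 :=
      Real.log_le_sub_one_of_pos (by positivity)
    have h2 : Real.log ((N - 1) / N) = Real.log (N - 1) - Real.log N :=
      Real.log_div (by linarith) (by linarith)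
    have h3 : (N - 1) / N - 1 = -(1 / N) := by field_simp; ring
    rw [h2, hlogN] at h1
    linarith [h1, h3.le, h3.ge]
  -- bound the logb term
  have hlogb : Real.logb 2 (N - 1) ≤ ((K : ℝ) * Real.log 2 - 1 / N) / Real.log 2 := by
    rw [Real.logb]
    exact div_le_div_of_nonneg_right hsub hlog2.le
  have hRHS : (1 - (K : ℝ)) + ((N - 1) / N) * Real.logb 2 (N - 1) ≤
      (1 - (K : ℝ)) + ((N - 1) / N) * (((K : ℝ) * Real.log 2 - 1 / N) / Real.log 2) := by
    have hfrac : (0 : ℝ) ≤ (N - 1) / N := by positivity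
    nlinarith [mul_le_mul_of_nonneg_left hlogb hfrac]
  -- key strict inequality
  have hkey : (K : ℝ) * N * Real.log 2 < (N - 1) ^ 2 := by
    have hKpos : (0 : ℝ) < (K : ℝ) := by positivity
    nlinarith [mul_pos hKpos hNpos]
  refine lt_of_le_of_lt hRHS ?_
  have hfinal : (N - (K : ℝ) - 1) / (N - 1) -
      ((1 - (K : ℝ)) + ((N - 1) / N) * (((K : ℝ) * Real.log 2 - 1 / N) / Real.log 2))
      = ((N - 1) ^ 2 - (K : ℝ) * N * Real.log 2) / (N ^ 2 * (N - 1) * Real.log 2) := by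
    field_simp
    ring
  have hpos : (0 : ℝ) < ((N - 1) ^ 2 - (K : ℝ) * N * Real.log 2) / (N ^ 2 * (N - 1) * Real.log 2) := by
    apply div_pos (by linarith) (by positivity)
  linarith
end
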